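/- Let S, M, A be finite types with uniform initialisation along M, and suppose a tabular Q-learning-style update modifies only the table entry at the visited augmented state (s, f(s)): Q_{t+1}(s, f(s), a) = (1−α)·Q_t(s, f(s), a) + α·(r + γ·max_{a'} Q_t(s', f(s'), a')) for visited transition (s, a, r, s'), leaving all other entries unchanged. Then for any two adversaries f, g and identical visited base transition sequences (s_t, a_t, r_t, s_{t+1}), the resulting tables satisfy Q_t^f(s, f(s), a) = Q_t^g(s, g(s), a) for all t, s, a. -/
import Mathlib


/-- Proposition 1 instantiated for tabular Q-learning: with uniform initialisation along
the message axis, identical visited base transitions `(s_t, a_t, r_t, s'_t)`, and the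
Q-learning update applied only at the visited augmented entry `(s_t, f s_t, a_t)`
(resp. `(s_t, g s_t, a_t)`), the executed value tables agree:
`Qf t s (f s) a = Qg t s (g s) a` for all `t, s, a`. -/
theorem q_learning_independent_of_adversary
    {S M A : Type} [Fintype S] [Fintype M] [Fintype A]
    [Nonempty A] [DecidableEq S] [DecidableEq M] [DecidableEq A]
    (γ : ℝ) (hγ0 : 0 ≤ γ) (hγ1 : γ < 1)
    (α : ℝ) (hα0 : 0 ≤ α) (hα1 : α ≤ 1)
    (f g : S → M)
    (traj : ℕ → S × A × ℝ × S)
    (Qf Qg : ℕ → S → M → A → ℝ)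
    (hunif : ∀ s m m' a, Qf 0 s m a = Qf 0 s m' a)
    (hinit : ∀ s m a, Qf 0 s m a = Qg 0 s m a)
    (hQf : ∀ t s m a,
      Qf (t + 1) s m a =
        if s = (traj t).1 ∧ m = f (traj t).1 ∧ a = (traj t).2.1 then
          (1 - α) * Qf t s m a +
            α * ((traj t).2.2.1 + γ *
              Finset.univ.sup' Finset.univ_nonempty
                (fun a' => Qf t (traj t).2.2.2 (f (traj t).2.2.2) a'))
        else Qf t s m a)
    (hQg : ∀ t s m a,
      Qg (t + 1) s m a =
        if s = (traj t).1 ∧ m = g (traj t).1 ∧ a = (traj t).2.1 then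
          (1 - α) * Qg t s m a +
            α * ((traj t).2.2.1 + γ *
              Finset.univ.sup' Finset.univ_nonempty
                (fun a' => Qg t (traj t).2.2.2 (g (traj t).2.2.2) a'))
        else Qg t s m a) :
    ∀ (t : ℕ) (s : S) (a : A), Qf t s (f s) a = Qg t s (g s) a := by

  intro t
  induction t with
  | zero =>
    intro s a
    rw [hunif s (f s) (g s) a, hinit]
  | succ t ih =>
    intro s a
    rw [hQf, hQg]
    by_cases hs : s = (traj t).1
    · subst hs
      by_cases ha : a = (traj t).2.1
      · simp only [ha, and_true, true_and, if_pos rfl]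
        have hsup : Finset.univ.sup' Finset.univ_nonempty
            (fun a' => Qf t (traj t).2.2.2 (f (traj t).2.2.2) a') =
            Finset.univ.sup' Finset.univ_nonempty
            (fun a' => Qg t (traj t).2.2.2 (g (traj t).2.2.2) a') := by
          apply Finset.sup'_congr _ rfl
          intro a' _
          exact ih _ a'
        rw [hsup, ih]
      · rw [if_neg (by simp [ha]), if_neg (by simp [ha])]
        exact ih _ a
    · rw [if_neg (by simp [hs]), if_neg (by simp [hs])]
      exact ih s a
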